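/- Let α, β be complex numbers with |α|² + |β|² = 1, and define p : ℂ × ℂ → ℂ by p (u, v) = ((conj α)·u + (conj β)·v)² · ((−β)·u + α·v)². Then there exist u, v ∈ ℂ such that p (u, v) − p (u, 0) − p (0, v) + p (0, 0) ≠ 0. -/

import Mathlib

/-- The quartic form arising from a beam-splitter acting on a superposition of two-mode
squeezed vacuum states. -/
noncomputable def beamSplitterQuartic (α β : ℂ) : ℂ × ℂ → ℂ :=
  fun q => ((starRingEnd ℂ α) * q.1 + (starRingEnd ℂ β) * q.2) ^ 2 *
    ((-β) * q.1 + α * q.2) ^ 2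

/-- The mixed part of the quartic form `p` never vanishes identically, for any admissible
beam-splitter parameters `(α, β)`. -/
theorem beamSplitterQuartic_mixed_part_ne_zero (α β : ℂ)
    (h : ‖α‖ ^ 2 + ‖β‖ ^ 2 = 1) :
    ∃ u v : ℂ,
      beamSplitterQuartic α β (u, v) - beamSplitterQuartic α β (u, 0) -
        beamSplitterQuartic α β (0, v) + beamSplitterQuartic α β (0, 0) ≠ 0 := by
  by_contra hcon
  push_neg at hcon
  have e1 := hcon 1 1
  have e2 := hcon 1 (-1)
  have e3 := hcon 1 2
  simp only [beamSplitterQuartic] at e1 e2 e3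
  set a := starRingEnd ℂ α with ha
  set b := starRingEnd ℂ β with hb
  have hc : a * α + b * β = 1 := by
    have h1 : ((Complex.normSq α : ℂ)) + (Complex.normSq β : ℂ) = 1 := by
      have : (Complex.normSq α : ℝ) + Complex.normSq β = 1 := by
        rw [← Complex.sq_norm, ← Complex.sq_norm]; exact h
      exact_mod_cast this
    rw [Complex.normSq_eq_conj_mul_self, Complex.normSq_eq_conj_mul_self] at h1
    exact h1
  -- `T = 0` : the `u²v²` coefficient of the mixed part vanishes
  have hT : (a * α - b * β) ^ 2 - 2 * (a * α) * (b * β) = 0 := by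
    linear_combination e1 / 2 + e2 / 2
  -- the `u³v` coefficient of the mixed part vanishes (halved)
  have hA : a * β * (a * α - b * β) = 0 := by
    linear_combination -e1 / 2 + e2 / 6 + e3 / 12
  by_cases hS : a * α - b * β = 0
  · have hx : a * α = 1 / 2 := by linear_combination (hc + hS) / 2
    have hy : b * β = 1 / 2 := by linear_combination (hc - hS) / 2
    have h10 : (1 : ℂ) = 0 := by
      linear_combination (-2) * hT + 2 * (a * α - b * β) * hS - 4 * (b * β) * hx - 2 * hy
    exact one_ne_zero h10
  · rcases mul_eq_zero.mp hA with haβ | hS'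
    · have h10 : (1 : ℂ) = 0 := by
        linear_combination -(a * α + b * β + 1) * hc + hT + 6 * (b * α) * haβ
      exact one_ne_zero h10
    · exact hS hS'
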